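/- (Corollary 3 iii–iv) In the compound multinomial model, if E[Y1_1^2], E[Y2_1^2], E[Y3_1^2], E[Y4_1^2] are all finite, then E[S1·S2] = t·p0·E[Y3_1·Y4_1] + t(t − 1)·(p1·E[Y1_1] + p0·E[Y3_1])·(p2·E[Y2_1] + p0·E[Y4_1]), and hence cov(S1, S2) = t·[p0·E[Y3_1·Y4_1] − (p1·E[Y1_1] + p0·E[Y3_1])·(p2·E[Y2_1] + p0·E[Y4_1])]. -/

import Mathlib

open MeasureTheory ProbabilityTheory Finset


noncomputable def mcoef (t b0 b1 b2 : ℕ) : ℝ :=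
  (Nat.factorial t : ℝ) /
    ((Nat.factorial b0 : ℝ) * (Nat.factorial b1 : ℝ) * (Nat.factorial b2 : ℝ) *
      (Nat.factorial (t - (b0 + b1 + b2)) : ℝ))

noncomputable def mterm (t : ℕ) (x y z w : ℝ) (b0 b1 b2 : ℕ) : ℝ :=
  mcoef t b0 b1 b2 * (x ^ b0 * y ^ b1 * z ^ b2 * w ^ (t - (b0 + b1 + b2)))

noncomputable def msum (t : ℕ) (x y z w : ℝ) (φ : ℕ → ℕ → ℕ → ℝ) : ℝ :=
  ∑ b0 ∈ range (t+1), ∑ b1 ∈ range (t+1-b0), ∑ b2 ∈ range (t+1-b0-b1),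
    φ b0 b1 b2 * mterm t x y z w b0 b1 b2

lemma fact_ne (n : ℕ) : ((Nat.factorial n : ℕ) : ℝ) ≠ 0 :=
  Nat.cast_ne_zero.2 (Nat.factorial_ne_zero n)

lemma mcoef_shift0 {t b0 b1 b2 : ℕ} (h : b0 + b1 + b2 ≤ t) :
    ((b0 : ℝ) + 1) * mcoef (t+1) (b0+1) b1 b2 = ((t : ℝ) + 1) * mcoef t b0 b1 b2 := by
  unfold mcoef
  rw [show t + 1 - (b0 + 1 + b1 + b2) = t - (b0 + b1 + b2) from by omega,
    Nat.factorial_succ b0, Nat.factorial_succ t]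
  have h0 := fact_ne b0; have h1 := fact_ne b1; have h2 := fact_ne b2
  have h3 := fact_ne (t - (b0 + b1 + b2))
  push_cast
  field_simp

lemma mcoef_shift1 {t b0 b1 b2 : ℕ} (h : b0 + b1 + b2 ≤ t) :
    ((b1 : ℝ) + 1) * mcoef (t+1) b0 (b1+1) b2 = ((t : ℝ) + 1) * mcoef t b0 b1 b2 := by
  unfold mcoef
  rw [show t + 1 - (b0 + (b1 + 1) + b2) = t - (b0 + b1 + b2) from by omega,
    Nat.factorial_succ b1, Nat.factorial_succ t]
  have h0 := fact_ne b0; have h1 := fact_ne b1; have h2 := fact_ne b2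
  have h3 := fact_ne (t - (b0 + b1 + b2))
  push_cast
  field_simp

lemma mcoef_shift2 {t b0 b1 b2 : ℕ} (h : b0 + b1 + b2 ≤ t) :
    ((b2 : ℝ) + 1) * mcoef (t+1) b0 b1 (b2+1) = ((t : ℝ) + 1) * mcoef t b0 b1 b2 := by
  unfold mcoef
  rw [show t + 1 - (b0 + b1 + (b2 + 1)) = t - (b0 + b1 + b2) from by omega,
    Nat.factorial_succ b2, Nat.factorial_succ t]
  have h0 := fact_ne b0; have h1 := fact_ne b1; have h2 := fact_ne b2
  have h3 := fact_ne (t - (b0 + b1 + b2))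
  push_cast
  field_simp

lemma mterm_shift0 {t b0 b1 b2 : ℕ} (x y z w : ℝ) (h : b0 + b1 + b2 ≤ t) :
    ((b0 : ℝ) + 1) * mterm (t+1) x y z w (b0+1) b1 b2
      = ((t : ℝ) + 1) * x * mterm t x y z w b0 b1 b2 := by
  unfold mterm
  rw [show t + 1 - (b0 + 1 + b1 + b2) = t - (b0 + b1 + b2) from by omega]
  linear_combination (x ^ b0 * x * y ^ b1 * z ^ b2 * w ^ (t - (b0 + b1 + b2))) * mcoef_shift0 h

lemma mterm_shift1 {t b0 b1 b2 : ℕ} (x y z w : ℝ) (h : b0 + b1 + b2 ≤ t) :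
    ((b1 : ℝ) + 1) * mterm (t+1) x y z w b0 (b1+1) b2
      = ((t : ℝ) + 1) * y * mterm t x y z w b0 b1 b2 := by
  unfold mterm
  rw [show t + 1 - (b0 + (b1 + 1) + b2) = t - (b0 + b1 + b2) from by omega]
  linear_combination (x ^ b0 * y ^ b1 * y * z ^ b2 * w ^ (t - (b0 + b1 + b2))) * mcoef_shift1 h

lemma mterm_shift2 {t b0 b1 b2 : ℕ} (x y z w : ℝ) (h : b0 + b1 + b2 ≤ t) :
    ((b2 : ℝ) + 1) * mterm (t+1) x y z w b0 b1 (b2+1)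
      = ((t : ℝ) + 1) * z * mterm t x y z w b0 b1 b2 := by
  unfold mterm
  rw [show t + 1 - (b0 + b1 + (b2 + 1)) = t - (b0 + b1 + b2) from by omega]
  linear_combination (x ^ b0 * y ^ b1 * z ^ b2 * z * w ^ (t - (b0 + b1 + b2))) * mcoef_shift2 h
lemma mcoef_eq_choose {t b0 b1 b2 : ℕ} (h : b0 + b1 + b2 ≤ t) :
    mcoef t b0 b1 b2
      = (t.choose b0 : ℝ) * ((t-b0).choose b1 : ℝ) * ((t-b0-b1).choose b2 : ℝ) := by
  have h0 : ((Nat.factorial b0 : ℕ) : ℝ) ≠ 0 := Nat.cast_ne_zero.2 (Nat.factorial_ne_zero _)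
  have h1 : ((Nat.factorial b1 : ℕ) : ℝ) ≠ 0 := Nat.cast_ne_zero.2 (Nat.factorial_ne_zero _)
  have h2 : ((Nat.factorial b2 : ℕ) : ℝ) ≠ 0 := Nat.cast_ne_zero.2 (Nat.factorial_ne_zero _)
  have h3 : ((Nat.factorial (t - (b0+b1+b2)) : ℕ) : ℝ) ≠ 0 :=
    Nat.cast_ne_zero.2 (Nat.factorial_ne_zero _)
  have h4 : ((Nat.factorial (t - b0) : ℕ) : ℝ) ≠ 0 := Nat.cast_ne_zero.2 (Nat.factorial_ne_zero _)
  have h5 : ((Nat.factorial (t - b0 - b1) : ℕ) : ℝ) ≠ 0 :=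
    Nat.cast_ne_zero.2 (Nat.factorial_ne_zero _)
  rw [Nat.cast_choose ℝ (show b0 ≤ t by omega), Nat.cast_choose ℝ (show b1 ≤ t - b0 by omega),
    Nat.cast_choose ℝ (show b2 ≤ t - b0 - b1 by omega)]
  rw [show t - b0 - b1 - b2 = t - (b0 + b1 + b2) from by omega]
  unfold mcoef
  field_simp

lemma sum_choose_pow (n : ℕ) (u v : ℝ) :
    ∑ k ∈ range (n+1), (n.choose k : ℝ) * u ^ k * v ^ (n - k) = (u + v) ^ n := by
  rw [add_pow]
  exact Finset.sum_congr rfl fun k _ => by ring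

lemma msum_one (t : ℕ) (x y z w : ℝ) :
    msum t x y z w (fun _ _ _ => (1:ℝ)) = (x + y + z + w) ^ t := by
  unfold msum
  have h2 : ∀ b0 ∈ range (t+1), ∀ b1 ∈ range (t+1-b0),
      (∑ b2 ∈ range (t+1-b0-b1), (1:ℝ) * mterm t x y z w b0 b1 b2)
        = (t.choose b0 : ℝ) * ((t-b0).choose b1 : ℝ) * (x ^ b0 * y ^ b1 * (z + w) ^ (t-b0-b1)) := by
    intro b0 hb0 b1 hb1
    rw [Finset.mem_range] at hb0 hb1
    rw [show t+1-b0-b1 = (t-b0-b1)+1 from by omega]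
    calc (∑ b2 ∈ range ((t-b0-b1)+1), (1:ℝ) * mterm t x y z w b0 b1 b2)
        = ∑ b2 ∈ range ((t-b0-b1)+1),
            ((t.choose b0 : ℝ) * ((t-b0).choose b1 : ℝ) * (x ^ b0 * y ^ b1)) *
              (((t-b0-b1).choose b2 : ℝ) * z ^ b2 * (w : ℝ) ^ (t-b0-b1-b2)) := by
          refine Finset.sum_congr rfl fun b2 hb2 => ?_
          rw [Finset.mem_range] at hb2
          rw [one_mul, mterm, mcoef_eq_choose (show b0+b1+b2 ≤ t from by omega),
            show t - (b0+b1+b2) = t-b0-b1-b2 from by omega]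
          ring
      _ = ((t.choose b0 : ℝ) * ((t-b0).choose b1 : ℝ) * (x ^ b0 * y ^ b1)) *
            ∑ b2 ∈ range ((t-b0-b1)+1),
              (((t-b0-b1).choose b2 : ℝ) * z ^ b2 * (w : ℝ) ^ (t-b0-b1-b2)) := by
          rw [Finset.mul_sum]
      _ = (t.choose b0 : ℝ) * ((t-b0).choose b1 : ℝ) * (x ^ b0 * y ^ b1 * (z + w) ^ (t-b0-b1)) := by
          rw [sum_choose_pow]; ring
  have h1 : ∀ b0 ∈ range (t+1),
      (∑ b1 ∈ range (t+1-b0), ∑ b2 ∈ range (t+1-b0-b1), (1:ℝ) * mterm t x y z w b0 b1 b2)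
        = (t.choose b0 : ℝ) * (x ^ b0 * (y + (z + w)) ^ (t-b0)) := by
    intro b0 hb0
    rw [Finset.sum_congr rfl (h2 b0 hb0)]
    rw [Finset.mem_range] at hb0
    rw [show t+1-b0 = (t-b0)+1 from by omega]
    calc (∑ b1 ∈ range ((t-b0)+1),
            (t.choose b0 : ℝ) * ((t-b0).choose b1 : ℝ) * (x ^ b0 * y ^ b1 * (z + w) ^ (t-b0-b1)))
        = ∑ b1 ∈ range ((t-b0)+1),
            ((t.choose b0 : ℝ) * x ^ b0) *
              (((t-b0).choose b1 : ℝ) * y ^ b1 * (z + w) ^ (t-b0-b1)) := by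
          exact Finset.sum_congr rfl fun b1 _ => by ring
      _ = ((t.choose b0 : ℝ) * x ^ b0) *
            ∑ b1 ∈ range ((t-b0)+1),
              (((t-b0).choose b1 : ℝ) * y ^ b1 * (z + w) ^ (t-b0-b1)) := by
          rw [Finset.mul_sum]
      _ = (t.choose b0 : ℝ) * (x ^ b0 * (y + (z + w)) ^ (t-b0)) := by
          rw [sum_choose_pow]; ring
  rw [Finset.sum_congr rfl h1]
  calc (∑ b0 ∈ range (t+1), (t.choose b0 : ℝ) * (x ^ b0 * (y + (z + w)) ^ (t-b0)))
      = ∑ b0 ∈ range (t+1), (t.choose b0 : ℝ) * x ^ b0 * (y + (z + w)) ^ (t-b0) := by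
        exact Finset.sum_congr rfl fun b0 _ => by ring
    _ = (x + (y + (z + w))) ^ t := sum_choose_pow t x (y + (z+w))
    _ = (x + y + z + w) ^ t := by ring
lemma msum_shift0 (t : ℕ) (x y z w : ℝ) (φ : ℕ → ℕ → ℕ → ℝ) :
    msum (t+1) x y z w (fun b0 b1 b2 => (b0 : ℝ) * φ b0 b1 b2)
      = ((t : ℝ) + 1) * x * msum t x y z w (fun b0 b1 b2 => φ (b0+1) b1 b2) := by
  unfold msum
  simp only [Finset.mul_sum]
  rw [Finset.sum_range_succ']
  simp only [Nat.cast_zero, zero_mul, Finset.sum_const_zero, add_zero]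
  refine Finset.sum_congr rfl fun b0 hb0 => ?_
  rw [show t + 1 + 1 - (b0 + 1) = t + 1 - b0 from by omega]
  refine Finset.sum_congr rfl fun b1 hb1 => ?_
  refine Finset.sum_congr rfl fun b2 hb2 => ?_
  rw [Finset.mem_range] at hb0 hb1 hb2
  have hb : b0 + b1 + b2 ≤ t := by omega
  push_cast
  linear_combination φ (b0+1) b1 b2 * mterm_shift0 x y z w hb

lemma msum_shift1 (t : ℕ) (x y z w : ℝ) (φ : ℕ → ℕ → ℕ → ℝ) :
    msum (t+1) x y z w (fun b0 b1 b2 => (b1 : ℝ) * φ b0 b1 b2)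
      = ((t : ℝ) + 1) * y * msum t x y z w (fun b0 b1 b2 => φ b0 (b1+1) b2) := by
  unfold msum
  simp only [Finset.mul_sum]
  rw [Finset.sum_range_succ]
  have hz : (∑ b1 ∈ range (t + 1 + 1 - (t+1)), ∑ b2 ∈ range (t + 1 + 1 - (t+1) - b1),
      (b1 : ℝ) * φ (t+1) b1 b2 * mterm (t+1) x y z w (t+1) b1 b2) = 0 := by
    rw [show t + 1 + 1 - (t+1) = 1 from by omega]
    simp
  rw [hz, add_zero]
  refine Finset.sum_congr rfl fun b0 hb0 => ?_
  rw [Finset.mem_range] at hb0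
  rw [show t + 1 + 1 - b0 = (t + 1 - b0) + 1 from by omega]
  rw [Finset.sum_range_succ']
  simp only [Nat.cast_zero, zero_mul, Finset.sum_const_zero, add_zero]
  refine Finset.sum_congr rfl fun b1 hb1 => ?_
  rw [Finset.mem_range] at hb1
  rw [show t + 1 - b0 + 1 - (b1 + 1) = t + 1 - b0 - b1 from by omega]
  refine Finset.sum_congr rfl fun b2 hb2 => ?_
  rw [Finset.mem_range] at hb2
  have hb : b0 + b1 + b2 ≤ t := by omega
  push_cast
  linear_combination φ b0 (b1+1) b2 * mterm_shift1 x y z w hb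

lemma msum_shift2 (t : ℕ) (x y z w : ℝ) (φ : ℕ → ℕ → ℕ → ℝ) :
    msum (t+1) x y z w (fun b0 b1 b2 => (b2 : ℝ) * φ b0 b1 b2)
      = ((t : ℝ) + 1) * z * msum t x y z w (fun b0 b1 b2 => φ b0 b1 (b2+1)) := by
  unfold msum
  simp only [Finset.mul_sum]
  rw [Finset.sum_range_succ]
  have hz : (∑ b1 ∈ range (t + 1 + 1 - (t+1)), ∑ b2 ∈ range (t + 1 + 1 - (t+1) - b1),
      (b2 : ℝ) * φ (t+1) b1 b2 * mterm (t+1) x y z w (t+1) b1 b2) = 0 := by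
    rw [show t + 1 + 1 - (t+1) = 1 from by omega]
    simp
  rw [hz, add_zero]
  refine Finset.sum_congr rfl fun b0 hb0 => ?_
  rw [Finset.mem_range] at hb0
  rw [show t + 1 + 1 - b0 = (t + 1 - b0) + 1 from by omega]
  rw [Finset.sum_range_succ]
  have hz2 : (∑ b2 ∈ range (t + 1 - b0 + 1 - (t + 1 - b0)),
      (b2 : ℝ) * φ b0 (t + 1 - b0) b2 * mterm (t+1) x y z w b0 (t + 1 - b0) b2) = 0 := by
    rw [show t + 1 - b0 + 1 - (t + 1 - b0) = 1 from by omega]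
    simp
  rw [hz2, add_zero]
  refine Finset.sum_congr rfl fun b1 hb1 => ?_
  rw [Finset.mem_range] at hb1
  rw [show t + 1 - b0 + 1 - b1 = (t + 1 - b0 - b1) + 1 from by omega]
  rw [Finset.sum_range_succ']
  simp only [Nat.cast_zero, zero_mul, Finset.sum_const_zero, add_zero]
  refine Finset.sum_congr rfl fun b2 hb2 => ?_
  rw [Finset.mem_range] at hb2
  have hb : b0 + b1 + b2 ≤ t := by omega
  push_cast
  linear_combination φ b0 b1 (b2+1) * mterm_shift2 x y z w hb

lemma msum_congr (t : ℕ) (x y z w : ℝ) {φ ψ : ℕ → ℕ → ℕ → ℝ}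
    (h : ∀ a b c, φ a b c = ψ a b c) : msum t x y z w φ = msum t x y z w ψ := by
  unfold msum
  exact Finset.sum_congr rfl fun a _ => Finset.sum_congr rfl fun b _ =>
    Finset.sum_congr rfl fun c _ => by rw [h]

lemma msum_b0 (t : ℕ) (x y z w : ℝ) :
    msum t x y z w (fun b0 _ _ => (b0 : ℝ)) = t * x * (x + y + z + w) ^ (t - 1) := by
  cases t with
  | zero => simp [msum]
  | succ n =>
    have h := msum_shift0 n x y z w (fun _ _ _ => (1:ℝ))
    simp only [mul_one] at h
    rw [h, msum_one, show n + 1 - 1 = n from rfl]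
    push_cast; ring

lemma msum_b1 (t : ℕ) (x y z w : ℝ) :
    msum t x y z w (fun _ b1 _ => (b1 : ℝ)) = t * y * (x + y + z + w) ^ (t - 1) := by
  cases t with
  | zero => simp [msum]
  | succ n =>
    have h := msum_shift1 n x y z w (fun _ _ _ => (1:ℝ))
    simp only [mul_one] at h
    rw [h, msum_one, show n + 1 - 1 = n from rfl]
    push_cast; ring

lemma msum_b2 (t : ℕ) (x y z w : ℝ) :
    msum t x y z w (fun _ _ b2 => (b2 : ℝ)) = t * z * (x + y + z + w) ^ (t - 1) := by
  cases t with
  | zero => simp [msum]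
  | succ n =>
    have h := msum_shift2 n x y z w (fun _ _ _ => (1:ℝ))
    simp only [mul_one] at h
    rw [h, msum_one, show n + 1 - 1 = n from rfl]
    push_cast; ring

lemma msum_b1b2 (t : ℕ) (x y z w : ℝ) :
    msum t x y z w (fun _ b1 b2 => (b1 : ℝ) * (b2 : ℝ))
      = t * ((t : ℝ) - 1) * y * z * (x + y + z + w) ^ (t - 2) := by
  cases t with
  | zero => simp [msum]
  | succ n =>
    have h := msum_shift1 n x y z w (fun _ _ b2 => (b2 : ℝ))
    beta_reduce at h
    rw [h, msum_b2, show n + 1 - 2 = n - 1 from by omega]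
    push_cast; ring

lemma msum_b0b1 (t : ℕ) (x y z w : ℝ) :
    msum t x y z w (fun b0 b1 _ => (b0 : ℝ) * (b1 : ℝ))
      = t * ((t : ℝ) - 1) * x * y * (x + y + z + w) ^ (t - 2) := by
  cases t with
  | zero => simp [msum]
  | succ n =>
    have h := msum_shift0 n x y z w (fun _ b1 _ => (b1 : ℝ))
    beta_reduce at h
    rw [h, msum_b1, show n + 1 - 2 = n - 1 from by omega]
    push_cast; ring

lemma msum_b0b2 (t : ℕ) (x y z w : ℝ) :
    msum t x y z w (fun b0 _ b2 => (b0 : ℝ) * (b2 : ℝ))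
      = t * ((t : ℝ) - 1) * x * z * (x + y + z + w) ^ (t - 2) := by
  cases t with
  | zero => simp [msum]
  | succ n =>
    have h := msum_shift0 n x y z w (fun _ _ b2 => (b2 : ℝ))
    beta_reduce at h
    rw [h, msum_b2, show n + 1 - 2 = n - 1 from by omega]
    push_cast; ring

lemma msum_b0b0 (t : ℕ) (x y z w : ℝ) :
    msum t x y z w (fun b0 _ _ => (b0 : ℝ) * ((b0 : ℝ) - 1))
      = t * ((t : ℝ) - 1) * x * x * (x + y + z + w) ^ (t - 2) := by
  cases t with
  | zero => simp [msum]
  | succ n =>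
    have h := msum_shift0 n x y z w (fun b0 _ _ => (b0 : ℝ) - 1)
    beta_reduce at h
    rw [h, msum_congr n x y z w (ψ := fun b0 _ _ => (b0 : ℝ))
        (fun a b c => by push_cast; ring), msum_b0,
      show n + 1 - 2 = n - 1 from by omega]
    push_cast; ring

lemma msum_decomp5 (t : ℕ) (x y z w c1 c2 c3 c4 c5 : ℝ) (φ1 φ2 φ3 φ4 φ5 : ℕ → ℕ → ℕ → ℝ) :
    msum t x y z w (fun a b c =>
        c1 * φ1 a b c + c2 * φ2 a b c + c3 * φ3 a b c + c4 * φ4 a b c + c5 * φ5 a b c)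
      = c1 * msum t x y z w φ1 + c2 * msum t x y z w φ2 + c3 * msum t x y z w φ3
          + c4 * msum t x y z w φ4 + c5 * msum t x y z w φ5 := by
  simp only [msum, add_mul, mul_assoc, Finset.sum_add_distrib, ← Finset.mul_sum]

lemma msum_decomp2 (t : ℕ) (x y z w c1 c2 : ℝ) (φ1 φ2 : ℕ → ℕ → ℕ → ℝ) :
    msum t x y z w (fun a b c => c1 * φ1 a b c + c2 * φ2 a b c)
      = c1 * msum t x y z w φ1 + c2 * msum t x y z w φ2 := by
  simp only [msum, add_mul, mul_assoc, Finset.sum_add_distrib, ← Finset.mul_sum]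


lemma indep_mono' {Ω : Type*} {mΩ : MeasurableSpace Ω} {μ : Measure Ω}
    {m1 m2 m1' m2' : MeasurableSpace Ω} (h : Indep m1 m2 μ) (h1 : m1' ≤ m1) (h2 : m2' ≤ m2) :
    Indep m1' m2' μ :=
  (Indep_iff _ _ _).2 fun t1 t2 ht1 ht2 => (Indep_iff _ _ _).1 h t1 t2 (h1 _ ht1) (h2 _ ht2)

lemma indepFun_of_measurable_le {Ω β γ : Type*} {mΩ : MeasurableSpace Ω}
    {mβ : MeasurableSpace β} {mγ : MeasurableSpace γ} {μ : Measure Ω}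
    {m1 m2 : MeasurableSpace Ω} (h : Indep m1 m2 μ) {X : Ω → β} {Y : Ω → γ}
    (hX : Measurable[m1] X) (hY : Measurable[m2] Y) : IndepFun X Y μ :=
  (IndepFun_iff_Indep _ _ _).2 (indep_mono' h hX.comap_le hY.comap_le)

lemma integrable_sum_mul_sum {Ω : Type*} [MeasureSpace Ω] (U V : ℕ → Ω → ℝ) (n m : ℕ)
    (h : ∀ i j, Integrable (fun ω => U i ω * V j ω) ℙ) :
    Integrable (fun ω => (∑ i ∈ range n, U i ω) * (∑ j ∈ range m, V j ω)) ℙ := by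
  have e : (fun ω => (∑ i ∈ range n, U i ω) * (∑ j ∈ range m, V j ω))
      = fun ω => ∑ i ∈ range n, ∑ j ∈ range m, U i ω * V j ω := by
    funext ω; rw [Finset.sum_mul_sum]
  rw [e]
  exact integrable_finset_sum _ fun i _ => integrable_finset_sum _ fun j _ => h i j

lemma integral_sum_mul_sum {Ω : Type*} [MeasureSpace Ω] (U V : ℕ → Ω → ℝ) (n m : ℕ)
    (h : ∀ i j, Integrable (fun ω => U i ω * V j ω) ℙ) :
    (∫ ω, (∑ i ∈ range n, U i ω) * (∑ j ∈ range m, V j ω) ∂ℙ)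
      = ∑ i ∈ range n, ∑ j ∈ range m, ∫ ω, U i ω * V j ω ∂ℙ := by
  have e : (fun ω => (∑ i ∈ range n, U i ω) * (∑ j ∈ range m, V j ω))
      = fun ω => ∑ i ∈ range n, ∑ j ∈ range m, U i ω * V j ω := by
    funext ω; rw [Finset.sum_mul_sum]
  rw [show (∫ ω, (∑ i ∈ range n, U i ω) * (∑ j ∈ range m, V j ω) ∂ℙ)
      = ∫ ω, ∑ i ∈ range n, ∑ j ∈ range m, U i ω * V j ω ∂ℙ from by rw [← e],
    integral_finset_sum _ fun i _ => integrable_finset_sum _ fun j _ => h i j]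
  exact Finset.sum_congr rfl fun i _ => integral_finset_sum _ fun j _ => h i j

lemma expectation_decomp {Ω : Type*} [MeasureSpace Ω] [IsProbabilityMeasure (ℙ : Measure Ω)]
    (t : ℕ) (B0 B1 B2 : Ω → ℕ) (hB0 : Measurable B0) (hB1 : Measurable B1) (hB2 : Measurable B2)
    (hle : ∀ᵐ ω ∂ℙ, B0 ω + B1 ω + B2 ω ≤ t)
    (G : ℕ → ℕ → ℕ → Ω → ℝ) (hGint : ∀ b0 b1 b2, Integrable (G b0 b1 b2) ℙ)
    (hGindep : ∀ b0 b1 b2, IndepFun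
      (Set.indicator {ω | B0 ω = b0 ∧ B1 ω = b1 ∧ B2 ω = b2} (fun _ => (1:ℝ))) (G b0 b1 b2) ℙ)
    (f : Ω → ℝ) (hf : ∀ ω, f ω = G (B0 ω) (B1 ω) (B2 ω) ω) :
    (∫ ω, f ω ∂ℙ) = ∑ b0 ∈ range (t+1), ∑ b1 ∈ range (t+1-b0), ∑ b2 ∈ range (t+1-b0-b1),
      (ℙ {ω | B0 ω = b0 ∧ B1 ω = b1 ∧ B2 ω = b2}).toReal * ∫ ω, G b0 b1 b2 ω ∂ℙ := by
  set E : ℕ → ℕ → ℕ → Set Ω := fun b0 b1 b2 => {ω | B0 ω = b0 ∧ B1 ω = b1 ∧ B2 ω = b2} with hE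
  have hEmeas : ∀ b0 b1 b2, MeasurableSet (E b0 b1 b2) := by
    intro b0 b1 b2
    have : E b0 b1 b2 = B0 ⁻¹' {b0} ∩ (B1 ⁻¹' {b1} ∩ B2 ⁻¹' {b2}) := by
      ext ω; simp [hE, and_assoc]
    rw [this]
    exact (hB0 (measurableSet_singleton _)).inter
      ((hB1 (measurableSet_singleton _)).inter (hB2 (measurableSet_singleton _)))
  have hind_int : ∀ b0 b1 b2, Integrable ((E b0 b1 b2).indicator (fun _ => (1:ℝ))) ℙ :=
    fun b0 b1 b2 => (integrable_const (1:ℝ)).indicator (hEmeas b0 b1 b2)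
  have hae : f =ᵐ[ℙ] fun ω => ∑ b0 ∈ range (t+1), ∑ b1 ∈ range (t+1-b0),
      ∑ b2 ∈ range (t+1-b0-b1), (E b0 b1 b2).indicator (fun _ => (1:ℝ)) ω * G b0 b1 b2 ω := by
    filter_upwards [hle] with ω hω
    rw [hf ω]
    rw [Finset.sum_eq_single_of_mem (B0 ω) (Finset.mem_range.2 (by omega))]
    · rw [Finset.sum_eq_single_of_mem (B1 ω) (Finset.mem_range.2 (by omega))]
      · rw [Finset.sum_eq_single_of_mem (B2 ω) (Finset.mem_range.2 (by omega))]
        · rw [Set.indicator_of_mem (by exact ⟨rfl, rfl, rfl⟩), one_mul]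
        · intro b2 _ hne
          rw [Set.indicator_of_notMem, zero_mul]
          intro hmem
          simp only [hE, Set.mem_setOf_eq] at hmem
          exact hne hmem.2.2.symm
      · intro b1 _ hne
        refine Finset.sum_eq_zero fun b2 _ => ?_
        rw [Set.indicator_of_notMem, zero_mul]
        intro hmem
        simp only [hE, Set.mem_setOf_eq] at hmem
        exact hne hmem.2.1.symm
    · intro b0 _ hne
      refine Finset.sum_eq_zero fun b1 _ => Finset.sum_eq_zero fun b2 _ => ?_
      rw [Set.indicator_of_notMem, zero_mul]
      intro hmem
      simp only [hE, Set.mem_setOf_eq] at hmem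
      exact hne hmem.1.symm
  rw [integral_congr_ae hae]
  have hint : ∀ b0 b1 b2, Integrable
      (fun ω => (E b0 b1 b2).indicator (fun _ => (1:ℝ)) ω * G b0 b1 b2 ω) ℙ :=
    fun b0 b1 b2 => (hGindep b0 b1 b2).integrable_mul (hind_int b0 b1 b2) (hGint b0 b1 b2)
  rw [integral_finset_sum _ fun b0 _ => integrable_finset_sum _ fun b1 _ =>
    integrable_finset_sum _ fun b2 _ => hint b0 b1 b2]
  refine Finset.sum_congr rfl fun b0 _ => ?_
  rw [integral_finset_sum _ fun b1 _ => integrable_finset_sum _ fun b2 _ => hint b0 b1 b2]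
  refine Finset.sum_congr rfl fun b1 _ => ?_
  rw [integral_finset_sum _ fun b2 _ => hint b0 b1 b2]
  refine Finset.sum_congr rfl fun b2 _ => ?_
  have := (hGindep b0 b1 b2).integral_mul_eq_mul_integral (hind_int b0 b1 b2).aestronglyMeasurable (hGint b0 b1 b2).aestronglyMeasurable
  rw [show (∫ ω, (E b0 b1 b2).indicator (fun _ => (1:ℝ)) ω * G b0 b1 b2 ω ∂ℙ)
      = ∫ ω, ((E b0 b1 b2).indicator (fun _ => (1:ℝ)) * G b0 b1 b2) ω ∂ℙ from rfl, this]
  congr 1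
  rw [MeasureTheory.integral_indicator_const (1:ℝ) (hEmeas b0 b1 b2), smul_eq_mul, mul_one, measureReal_def]

/-- `(B0, B1, B2)` has the multinomial distribution with parameters `t` and `(p0, p1, p2)`. -/
def IsMultinomial {Ω : Type*} [MeasureSpace Ω] (t : ℕ) (p0 p1 p2 : ℝ)
    (B0 B1 B2 : Ω → ℕ) : Prop :=
  Measurable B0 ∧ Measurable B1 ∧ Measurable B2 ∧
  ∀ b0 b1 b2 : ℕ,
    (ℙ {ω | B0 ω = b0 ∧ B1 ω = b1 ∧ B2 ω = b2}).toReal =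
      if b0 + b1 + b2 ≤ t then
        (Nat.factorial t : ℝ) /
          ((Nat.factorial b0 : ℝ) * (Nat.factorial b1 : ℝ) * (Nat.factorial b2 : ℝ) *
            (Nat.factorial (t - (b0 + b1 + b2)) : ℝ)) *
          (p0 ^ b0 * p1 ^ b1 * p2 ^ b2 * (1 - (p0 + p1 + p2)) ^ (t - (b0 + b1 + b2)))
      else 0

/-- Corollary 3 iii–iv: the cross moment `E[S1·S2]` and the covariance
`cov(S1, S2) = E[S1 S2] − E[S1] E[S2]` in the compound multinomial model. -/
theorem cross_moment_and_covariance_of_compound_multinomial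
    {Ω : Type*} [MeasureSpace Ω] [IsProbabilityMeasure (ℙ : Measure Ω)]
    (t : ℕ) (p0 p1 p2 : ℝ) (hp0 : 0 ≤ p0) (hp1 : 0 ≤ p1) (hp2 : 0 ≤ p2)
    (hp : p0 + p1 + p2 ≤ 1)
    (B0 B1 B2 : Ω → ℕ) (hmult : IsMultinomial t p0 p1 p2 B0 B1 B2)
    (Y1 Y2 Y3 Y4 : ℕ → Ω → ℝ)
    (hmeas : ∀ i, Measurable (Y1 i) ∧ Measurable (Y2 i) ∧ Measurable (Y3 i) ∧ Measurable (Y4 i))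
    (hpos : ∀ i, (∀ᵐ ω ∂ℙ, 0 < Y1 i ω) ∧ (∀ᵐ ω ∂ℙ, 0 < Y2 i ω) ∧
      (∀ᵐ ω ∂ℙ, 0 < Y3 i ω) ∧ (∀ᵐ ω ∂ℙ, 0 < Y4 i ω))
    (hid1 : ∀ i, IdentDistrib (Y1 i) (Y1 0) ℙ ℙ)
    (hid2 : ∀ i, IdentDistrib (Y2 i) (Y2 0) ℙ ℙ)
    (hid34 : ∀ i, IdentDistrib (fun ω => (Y3 i ω, Y4 i ω)) (fun ω => (Y3 0 ω, Y4 0 ω)) ℙ ℙ)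
    (hindep : iIndepFun
      (fun i : Option (ℕ ⊕ ℕ ⊕ ℕ) => (match i with
        | none => fun ω => ((B0 ω : ℝ), (B1 ω : ℝ), (B2 ω : ℝ))
        | some (.inl i) => fun ω => (Y1 i ω, 0, 0)
        | some (.inr (.inl i)) => fun ω => (Y2 i ω, 0, 0)
        | some (.inr (.inr i)) => fun ω => (Y3 i ω, Y4 i ω, 0) : Ω → ℝ × ℝ × ℝ)) ℙ)
    (hint1 : Integrable (fun ω => Y1 0 ω ^ 2) ℙ) (hint2 : Integrable (fun ω => Y2 0 ω ^ 2) ℙ)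
    (hint3 : Integrable (fun ω => Y3 0 ω ^ 2) ℙ) (hint4 : Integrable (fun ω => Y4 0 ω ^ 2) ℙ) :
    (∫ ω, (∑ i ∈ Finset.range (B1 ω), Y1 i ω + ∑ i ∈ Finset.range (B0 ω), Y3 i ω) *
          (∑ i ∈ Finset.range (B2 ω), Y2 i ω + ∑ i ∈ Finset.range (B0 ω), Y4 i ω) ∂ℙ) =
      t * p0 * (∫ ω, Y3 0 ω * Y4 0 ω ∂ℙ) +
        t * (t - 1) * (p1 * (∫ ω, Y1 0 ω ∂ℙ) + p0 * (∫ ω, Y3 0 ω ∂ℙ)) *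
          (p2 * (∫ ω, Y2 0 ω ∂ℙ) + p0 * (∫ ω, Y4 0 ω ∂ℙ)) ∧
    (∫ ω, (∑ i ∈ Finset.range (B1 ω), Y1 i ω + ∑ i ∈ Finset.range (B0 ω), Y3 i ω) *
          (∑ i ∈ Finset.range (B2 ω), Y2 i ω + ∑ i ∈ Finset.range (B0 ω), Y4 i ω) ∂ℙ) -
      (∫ ω, (∑ i ∈ Finset.range (B1 ω), Y1 i ω + ∑ i ∈ Finset.range (B0 ω), Y3 i ω) ∂ℙ) *
      (∫ ω, (∑ i ∈ Finset.range (B2 ω), Y2 i ω + ∑ i ∈ Finset.range (B0 ω), Y4 i ω) ∂ℙ) =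
      t * (p0 * (∫ ω, Y3 0 ω * Y4 0 ω ∂ℙ) -
        (p1 * (∫ ω, Y1 0 ω ∂ℙ) + p0 * (∫ ω, Y3 0 ω ∂ℙ)) *
        (p2 * (∫ ω, Y2 0 ω ∂ℙ) + p0 * (∫ ω, Y4 0 ω ∂ℙ))) := by
  classical
  obtain ⟨hB0, hB1, hB2, hpmf⟩ := hmult
  set μ1 : ℝ := ∫ ω, Y1 0 ω ∂ℙ with hμ1
  set μ2 : ℝ := ∫ ω, Y2 0 ω ∂ℙ with hμ2
  set μ3 : ℝ := ∫ ω, Y3 0 ω ∂ℙ with hμ3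
  set μ4 : ℝ := ∫ ω, Y4 0 ω ∂ℙ with hμ4
  set m34 : ℝ := ∫ ω, Y3 0 ω * Y4 0 ω ∂ℙ with hm34
  set F : Option (ℕ ⊕ ℕ ⊕ ℕ) → Ω → ℝ × ℝ × ℝ := fun i => (match i with
        | none => fun ω => ((B0 ω : ℝ), (B1 ω : ℝ), (B2 ω : ℝ))
        | some (.inl i) => fun ω => (Y1 i ω, 0, 0)
        | some (.inr (.inl i)) => fun ω => (Y2 i ω, 0, 0)
        | some (.inr (.inr i)) => fun ω => (Y3 i ω, Y4 i ω, 0) : Ω → ℝ × ℝ × ℝ) with hF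
  have hindepF : iIndepFun F ℙ := hindep
  have hFmeas : ∀ i, Measurable (F i) := by
    rintro (_ | (i | (i | i)))
    · exact (measurable_from_nat.comp hB0).prodMk
        ((measurable_from_nat.comp hB1).prodMk (measurable_from_nat.comp hB2))
    · exact (hmeas i).1.prodMk (measurable_const.prodMk measurable_const)
    · exact (hmeas i).2.1.prodMk (measurable_const.prodMk measurable_const)
    · exact (hmeas i).2.2.1.prodMk ((hmeas i).2.2.2.prodMk measurable_const)
  -- identically distributed components
  have hid3 : ∀ i, IdentDistrib (Y3 i) (Y3 0) ℙ ℙ := fun i => (hid34 i).comp measurable_fst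
  have hid4 : ∀ i, IdentDistrib (Y4 i) (Y4 0) ℙ ℙ := fun i => (hid34 i).comp measurable_snd
  -- basic integrability
  have sqInt : ∀ (W : Ω → ℝ), Measurable W → Integrable (fun ω => W ω ^ 2) ℙ →
      Integrable W ℙ := by
    intro W hW hW2
    refine Integrable.mono' ((integrable_const (1:ℝ)).add hW2) hW.aestronglyMeasurable ?_
    refine Filter.Eventually.of_forall fun ω => ?_
    simp only [Pi.add_apply, Real.norm_eq_abs]
    have h1 := sq_nonneg (|W ω| - 1)
    have h2 : |W ω| ^ 2 = W ω ^ 2 := sq_abs _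
    nlinarith [abs_nonneg (W ω)]
  have int1 : ∀ i, Integrable (Y1 i) ℙ :=
    fun i => (hid1 i).integrable_iff.2 (sqInt _ (hmeas 0).1 hint1)
  have int2 : ∀ i, Integrable (Y2 i) ℙ :=
    fun i => (hid2 i).integrable_iff.2 (sqInt _ (hmeas 0).2.1 hint2)
  have int3 : ∀ i, Integrable (Y3 i) ℙ :=
    fun i => (hid3 i).integrable_iff.2 (sqInt _ (hmeas 0).2.2.1 hint3)
  have int4 : ∀ i, Integrable (Y4 i) ℙ :=
    fun i => (hid4 i).integrable_iff.2 (sqInt _ (hmeas 0).2.2.2 hint4)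
  have intsq3 : ∀ i, Integrable (fun ω => Y3 i ω ^ 2) ℙ :=
    fun i => ((hid3 i).comp (measurable_id.pow_const 2)).integrable_iff.2 hint3
  have intsq4 : ∀ i, Integrable (fun ω => Y4 i ω ^ 2) ℙ :=
    fun i => ((hid4 i).comp (measurable_id.pow_const 2)).integrable_iff.2 hint4
  have int34 : ∀ i, Integrable (fun ω => Y3 i ω * Y4 i ω) ℙ := by
    intro i
    refine Integrable.mono' ((intsq3 i).add (intsq4 i))
      ((hmeas i).2.2.1.mul (hmeas i).2.2.2).aestronglyMeasurable ?_
    refine Filter.Eventually.of_forall fun ω => ?_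
    have h1 := sq_nonneg (|Y3 i ω| - |Y4 i ω|)
    have h2 : |Y3 i ω| ^ 2 = Y3 i ω ^ 2 := sq_abs _
    have h3 : |Y4 i ω| ^ 2 = Y4 i ω ^ 2 := sq_abs _
    simp only [Pi.add_apply, Real.norm_eq_abs]
    have h4 : |Y3 i ω * Y4 i ω| = |Y3 i ω| * |Y4 i ω| := abs_mul _ _
    nlinarith [abs_nonneg (Y3 i ω), abs_nonneg (Y4 i ω)]
  -- pairwise independence of Y components
  have hI12 : ∀ i j, IndepFun (Y1 i) (Y2 j) ℙ := fun i j =>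
    (hindepF.indepFun (show (some (Sum.inl i) : Option (ℕ ⊕ ℕ ⊕ ℕ))
      ≠ some (Sum.inr (Sum.inl j)) by simp)).comp measurable_fst measurable_fst
  have hI14 : ∀ i j, IndepFun (Y1 i) (Y4 j) ℙ := fun i j =>
    (hindepF.indepFun (show (some (Sum.inl i) : Option (ℕ ⊕ ℕ ⊕ ℕ))
      ≠ some (Sum.inr (Sum.inr j)) by simp)).comp measurable_fst
      (measurable_fst.comp measurable_snd)
  have hI32 : ∀ i j, IndepFun (Y3 i) (Y2 j) ℙ := fun i j =>
    (hindepF.indepFun (show (some (Sum.inr (Sum.inr i)) : Option (ℕ ⊕ ℕ ⊕ ℕ))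
      ≠ some (Sum.inr (Sum.inl j)) by simp)).comp measurable_fst measurable_fst
  have hI34 : ∀ i j, i ≠ j → IndepFun (Y3 i) (Y4 j) ℙ := fun i j hij =>
    (hindepF.indepFun (show (some (Sum.inr (Sum.inr i)) : Option (ℕ ⊕ ℕ ⊕ ℕ))
      ≠ some (Sum.inr (Sum.inr j)) by simp [hij])).comp measurable_fst
      (measurable_fst.comp measurable_snd)
  -- integral values
  have hE1 : ∀ i, (∫ ω, Y1 i ω ∂ℙ) = μ1 := fun i => (hid1 i).integral_eq
  have hE2 : ∀ i, (∫ ω, Y2 i ω ∂ℙ) = μ2 := fun i => (hid2 i).integral_eq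
  have hE3 : ∀ i, (∫ ω, Y3 i ω ∂ℙ) = μ3 := fun i => (hid3 i).integral_eq
  have hE4 : ∀ i, (∫ ω, Y4 i ω ∂ℙ) = μ4 := fun i => (hid4 i).integral_eq
  have hEm34 : ∀ i, (∫ ω, Y3 i ω * Y4 i ω ∂ℙ) = m34 := fun i =>
    ((hid34 i).comp (measurable_fst.mul measurable_snd)).integral_eq
  have h12int : ∀ i j, Integrable (fun ω => Y1 i ω * Y2 j ω) ℙ :=
    fun i j => (hI12 i j).integrable_mul (int1 i) (int2 j)
  have h14int : ∀ i j, Integrable (fun ω => Y1 i ω * Y4 j ω) ℙ :=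
    fun i j => (hI14 i j).integrable_mul (int1 i) (int4 j)
  have h32int : ∀ i j, Integrable (fun ω => Y3 i ω * Y2 j ω) ℙ :=
    fun i j => (hI32 i j).integrable_mul (int3 i) (int2 j)
  have h34int : ∀ i j, Integrable (fun ω => Y3 i ω * Y4 j ω) ℙ := by
    intro i j
    by_cases hij : i = j
    · subst hij; exact int34 i
    · exact (hI34 i j hij).integrable_mul (int3 i) (int4 j)
  have h12val : ∀ i j, (∫ ω, Y1 i ω * Y2 j ω ∂ℙ) = μ1 * μ2 := by
    intro i j
    have h := (hI12 i j).integral_mul_eq_mul_integral (int1 i).aestronglyMeasurable (int2 j).aestronglyMeasurable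
    calc (∫ ω, Y1 i ω * Y2 j ω ∂ℙ) = (∫ ω, Y1 i ω ∂ℙ) * ∫ ω, Y2 j ω ∂ℙ := h
      _ = μ1 * μ2 := by rw [hE1 i, hE2 j]
  have h14val : ∀ i j, (∫ ω, Y1 i ω * Y4 j ω ∂ℙ) = μ1 * μ4 := by
    intro i j
    have h := (hI14 i j).integral_mul_eq_mul_integral (int1 i).aestronglyMeasurable (int4 j).aestronglyMeasurable
    calc (∫ ω, Y1 i ω * Y4 j ω ∂ℙ) = (∫ ω, Y1 i ω ∂ℙ) * ∫ ω, Y4 j ω ∂ℙ := h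
      _ = μ1 * μ4 := by rw [hE1 i, hE4 j]
  have h32val : ∀ i j, (∫ ω, Y3 i ω * Y2 j ω ∂ℙ) = μ3 * μ2 := by
    intro i j
    have h := (hI32 i j).integral_mul_eq_mul_integral (int3 i).aestronglyMeasurable (int2 j).aestronglyMeasurable
    calc (∫ ω, Y3 i ω * Y2 j ω ∂ℙ) = (∫ ω, Y3 i ω ∂ℙ) * ∫ ω, Y2 j ω ∂ℙ := h
      _ = μ3 * μ2 := by rw [hE3 i, hE2 j]
  have h34val : ∀ i j, (∫ ω, Y3 i ω * Y4 j ω ∂ℙ)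
      = μ3 * μ4 + (if i = j then m34 - μ3 * μ4 else 0) := by
    intro i j
    by_cases hij : i = j
    · subst hij
      rw [if_pos rfl, hEm34 i]; ring
    · rw [if_neg hij, add_zero]
      have h := (hI34 i j hij).integral_mul_eq_mul_integral (int3 i).aestronglyMeasurable (int4 j).aestronglyMeasurable
      calc (∫ ω, Y3 i ω * Y4 j ω ∂ℙ) = (∫ ω, Y3 i ω ∂ℙ) * ∫ ω, Y4 j ω ∂ℙ := h
        _ = μ3 * μ4 := by rw [hE3 i, hE4 j]
  -- almost sure bound on B0 + B1 + B2
  have hle : ∀ᵐ ω ∂ℙ, B0 ω + B1 ω + B2 ω ≤ t := by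
    rw [MeasureTheory.ae_iff]
    have hsub : {ω | ¬ B0 ω + B1 ω + B2 ω ≤ t} ⊆
        ⋃ b : ℕ × ℕ × ℕ, {ω | (B0 ω = b.1 ∧ B1 ω = b.2.1 ∧ B2 ω = b.2.2) ∧ t < b.1 + b.2.1 + b.2.2} := by
      intro ω hω
      exact Set.mem_iUnion.2 ⟨(B0 ω, B1 ω, B2 ω), ⟨rfl, rfl, rfl⟩, by
        simpa using hω⟩
    refine le_antisymm (le_trans (measure_mono hsub) (le_of_eq (measure_iUnion_null fun b => ?_)))
      zero_le
    by_cases hb : t < b.1 + b.2.1 + b.2.2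
    · have h0 : (ℙ {ω | B0 ω = b.1 ∧ B1 ω = b.2.1 ∧ B2 ω = b.2.2}) = 0 := by
        have h := hpmf b.1 b.2.1 b.2.2
        rw [if_neg (by omega)] at h
        exact ((ENNReal.toReal_eq_zero_iff _).1 h).resolve_right (measure_ne_top ℙ _)
      exact measure_mono_null (fun ω hω => hω.1) h0
    · have : {ω | (B0 ω = b.1 ∧ B1 ω = b.2.1 ∧ B2 ω = b.2.2) ∧ t < b.1 + b.2.1 + b.2.2}
          = (∅ : Set Ω) := by
        ext ω; simp only [Set.mem_setOf_eq, Set.mem_empty_iff_false, iff_false]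
        rintro ⟨-, h⟩; exact hb h
      rw [this]; exact measure_empty
  -- the compound sums
  set G : ℕ → ℕ → ℕ → Ω → ℝ := fun b0 b1 b2 ω =>
    (∑ i ∈ range b1, Y1 i ω + ∑ i ∈ range b0, Y3 i ω) *
      (∑ i ∈ range b2, Y2 i ω + ∑ i ∈ range b0, Y4 i ω) with hG
  set G1 : ℕ → ℕ → ℕ → Ω → ℝ := fun b0 b1 _ ω =>
    ∑ i ∈ range b1, Y1 i ω + ∑ i ∈ range b0, Y3 i ω with hG1
  set G2 : ℕ → ℕ → ℕ → Ω → ℝ := fun b0 _ b2 ω =>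
    ∑ i ∈ range b2, Y2 i ω + ∑ i ∈ range b0, Y4 i ω with hG2
  have hGeq : ∀ b0 b1 b2, G b0 b1 b2 = fun ω =>
      (∑ i ∈ range b1, Y1 i ω) * (∑ j ∈ range b2, Y2 j ω) +
      ((∑ i ∈ range b1, Y1 i ω) * (∑ j ∈ range b0, Y4 j ω) +
      ((∑ i ∈ range b0, Y3 i ω) * (∑ j ∈ range b2, Y2 j ω) +
       (∑ i ∈ range b0, Y3 i ω) * (∑ j ∈ range b0, Y4 j ω))) := by
    intro b0 b1 b2; funext ω; rw [hG]; ring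
  have hGint : ∀ b0 b1 b2, Integrable (G b0 b1 b2) ℙ := by
    intro b0 b1 b2
    rw [hGeq b0 b1 b2]
    exact (integrable_sum_mul_sum Y1 Y2 b1 b2 h12int).add
      ((integrable_sum_mul_sum Y1 Y4 b1 b0 h14int).add
      ((integrable_sum_mul_sum Y3 Y2 b0 b2 h32int).add
       (integrable_sum_mul_sum Y3 Y4 b0 b0 h34int)))
  have hG1int : ∀ b0 b1 b2, Integrable (G1 b0 b1 b2) ℙ := fun b0 b1 b2 =>
    (integrable_finset_sum _ fun i _ => int1 i).add (integrable_finset_sum _ fun i _ => int3 i)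
  have hG2int : ∀ b0 b1 b2, Integrable (G2 b0 b1 b2) ℙ := fun b0 b1 b2 =>
    (integrable_finset_sum _ fun i _ => int2 i).add (integrable_finset_sum _ fun i _ => int4 i)
  -- integral values of G
  have s12 : ∀ b1 b2 : ℕ, (∫ ω, (∑ i ∈ range b1, Y1 i ω) * (∑ j ∈ range b2, Y2 j ω) ∂ℙ)
      = (b1 : ℝ) * (b2 : ℝ) * (μ1 * μ2) := by
    intro b1 b2
    rw [integral_sum_mul_sum Y1 Y2 b1 b2 h12int]
    rw [Finset.sum_congr rfl fun i _ => Finset.sum_congr rfl fun j _ => h12val i j]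
    simp [Finset.sum_const, Finset.card_range, nsmul_eq_mul]; ring
  have s14 : ∀ b1 b0 : ℕ, (∫ ω, (∑ i ∈ range b1, Y1 i ω) * (∑ j ∈ range b0, Y4 j ω) ∂ℙ)
      = (b1 : ℝ) * (b0 : ℝ) * (μ1 * μ4) := by
    intro b1 b0
    rw [integral_sum_mul_sum Y1 Y4 b1 b0 h14int]
    rw [Finset.sum_congr rfl fun i _ => Finset.sum_congr rfl fun j _ => h14val i j]
    simp [Finset.sum_const, Finset.card_range, nsmul_eq_mul]; ring
  have s32 : ∀ b0 b2 : ℕ, (∫ ω, (∑ i ∈ range b0, Y3 i ω) * (∑ j ∈ range b2, Y2 j ω) ∂ℙ)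
      = (b0 : ℝ) * (b2 : ℝ) * (μ3 * μ2) := by
    intro b0 b2
    rw [integral_sum_mul_sum Y3 Y2 b0 b2 h32int]
    rw [Finset.sum_congr rfl fun i _ => Finset.sum_congr rfl fun j _ => h32val i j]
    simp [Finset.sum_const, Finset.card_range, nsmul_eq_mul]; ring
  have s34 : ∀ b0 : ℕ, (∫ ω, (∑ i ∈ range b0, Y3 i ω) * (∑ j ∈ range b0, Y4 j ω) ∂ℙ)
      = (b0 : ℝ) * (b0 : ℝ) * (μ3 * μ4) + (b0 : ℝ) * (m34 - μ3 * μ4) := by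
    intro b0
    rw [integral_sum_mul_sum Y3 Y4 b0 b0 h34int]
    rw [Finset.sum_congr rfl fun i _ => Finset.sum_congr rfl fun j _ => h34val i j]
    rw [Finset.sum_congr rfl fun i (_ : i ∈ range b0) => Finset.sum_add_distrib]
    rw [Finset.sum_add_distrib]
    congr 1
    · simp [Finset.sum_const, Finset.card_range]; try ring
    · rw [Finset.sum_congr rfl fun i (hi : i ∈ range b0) => Finset.sum_ite_eq (range b0) i
        (fun _ => m34 - μ3 * μ4)]
      rw [Finset.sum_congr rfl fun i (hi : i ∈ range b0) => if_pos hi]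
      simp [Finset.sum_const, Finset.card_range]; try ring
  have hGval : ∀ b0 b1 b2, (∫ ω, G b0 b1 b2 ω ∂ℙ)
      = μ1 * μ2 * ((b1 : ℝ) * (b2 : ℝ)) + μ1 * μ4 * ((b0 : ℝ) * (b1 : ℝ))
        + μ3 * μ2 * ((b0 : ℝ) * (b2 : ℝ)) + μ3 * μ4 * ((b0 : ℝ) * ((b0 : ℝ) - 1))
        + m34 * (b0 : ℝ) := by
    intro b0 b1 b2
    have e2 : (∫ ω, G b0 b1 b2 ω ∂ℙ) = ∫ ω,
        ((∑ i ∈ range b1, Y1 i ω) * (∑ j ∈ range b2, Y2 j ω) +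
        ((∑ i ∈ range b1, Y1 i ω) * (∑ j ∈ range b0, Y4 j ω) +
        ((∑ i ∈ range b0, Y3 i ω) * (∑ j ∈ range b2, Y2 j ω) +
         (∑ i ∈ range b0, Y3 i ω) * (∑ j ∈ range b0, Y4 j ω)))) ∂ℙ := by
      congr 1; funext ω; rw [hG]; ring
    rw [e2]
    have st1 : (∫ ω,
        ((∑ i ∈ range b1, Y1 i ω) * (∑ j ∈ range b2, Y2 j ω) +
        ((∑ i ∈ range b1, Y1 i ω) * (∑ j ∈ range b0, Y4 j ω) +
        ((∑ i ∈ range b0, Y3 i ω) * (∑ j ∈ range b2, Y2 j ω) +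
         (∑ i ∈ range b0, Y3 i ω) * (∑ j ∈ range b0, Y4 j ω)))) ∂ℙ)
        = (∫ ω, (∑ i ∈ range b1, Y1 i ω) * (∑ j ∈ range b2, Y2 j ω) ∂ℙ) +
          ∫ ω, ((∑ i ∈ range b1, Y1 i ω) * (∑ j ∈ range b0, Y4 j ω) +
        ((∑ i ∈ range b0, Y3 i ω) * (∑ j ∈ range b2, Y2 j ω) +
         (∑ i ∈ range b0, Y3 i ω) * (∑ j ∈ range b0, Y4 j ω))) ∂ℙ :=
      integral_add (integrable_sum_mul_sum Y1 Y2 b1 b2 h12int)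
        ((integrable_sum_mul_sum Y1 Y4 b1 b0 h14int).add
          ((integrable_sum_mul_sum Y3 Y2 b0 b2 h32int).add
            (integrable_sum_mul_sum Y3 Y4 b0 b0 h34int)))
    have st2 : (∫ ω, ((∑ i ∈ range b1, Y1 i ω) * (∑ j ∈ range b0, Y4 j ω) +
        ((∑ i ∈ range b0, Y3 i ω) * (∑ j ∈ range b2, Y2 j ω) +
         (∑ i ∈ range b0, Y3 i ω) * (∑ j ∈ range b0, Y4 j ω))) ∂ℙ)
        = (∫ ω, (∑ i ∈ range b1, Y1 i ω) * (∑ j ∈ range b0, Y4 j ω) ∂ℙ) +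
          ∫ ω, ((∑ i ∈ range b0, Y3 i ω) * (∑ j ∈ range b2, Y2 j ω) +
         (∑ i ∈ range b0, Y3 i ω) * (∑ j ∈ range b0, Y4 j ω)) ∂ℙ :=
      integral_add (integrable_sum_mul_sum Y1 Y4 b1 b0 h14int)
        ((integrable_sum_mul_sum Y3 Y2 b0 b2 h32int).add
          (integrable_sum_mul_sum Y3 Y4 b0 b0 h34int))
    have st3 : (∫ ω, ((∑ i ∈ range b0, Y3 i ω) * (∑ j ∈ range b2, Y2 j ω) +
         (∑ i ∈ range b0, Y3 i ω) * (∑ j ∈ range b0, Y4 j ω)) ∂ℙ)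
        = (∫ ω, (∑ i ∈ range b0, Y3 i ω) * (∑ j ∈ range b2, Y2 j ω) ∂ℙ) +
          ∫ ω, (∑ i ∈ range b0, Y3 i ω) * (∑ j ∈ range b0, Y4 j ω) ∂ℙ :=
      integral_add (integrable_sum_mul_sum Y3 Y2 b0 b2 h32int)
        (integrable_sum_mul_sum Y3 Y4 b0 b0 h34int)
    rw [st1, st2, st3, s12 b1 b2, s14 b1 b0, s32 b0 b2, s34 b0]
    ring
  have hG1val : ∀ b0 b1 b2, (∫ ω, G1 b0 b1 b2 ω ∂ℙ)
      = μ1 * (b1 : ℝ) + μ3 * (b0 : ℝ) := by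
    intro b0 b1 b2
    have e2 : (∫ ω, G1 b0 b1 b2 ω ∂ℙ)
        = ∫ ω, (∑ i ∈ range b1, Y1 i ω + ∑ i ∈ range b0, Y3 i ω) ∂ℙ := rfl
    have st1 : (∫ ω, (∑ i ∈ range b1, Y1 i ω + ∑ i ∈ range b0, Y3 i ω) ∂ℙ)
        = (∫ ω, (∑ i ∈ range b1, Y1 i ω) ∂ℙ) + ∫ ω, (∑ i ∈ range b0, Y3 i ω) ∂ℙ :=
      integral_add (integrable_finset_sum _ fun i _ => int1 i)
        (integrable_finset_sum _ fun i _ => int3 i)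
    have st2 : (∫ ω, (∑ i ∈ range b1, Y1 i ω) ∂ℙ) = ∑ i ∈ range b1, ∫ ω, Y1 i ω ∂ℙ :=
      integral_finset_sum _ fun i _ => int1 i
    have st3 : (∫ ω, (∑ i ∈ range b0, Y3 i ω) ∂ℙ) = ∑ i ∈ range b0, ∫ ω, Y3 i ω ∂ℙ :=
      integral_finset_sum _ fun i _ => int3 i
    rw [e2, st1, st2, st3, Finset.sum_congr rfl fun i _ => hE1 i,
      Finset.sum_congr rfl fun i _ => hE3 i]
    simp [Finset.sum_const, Finset.card_range]; try ring
  have hG2val : ∀ b0 b1 b2, (∫ ω, G2 b0 b1 b2 ω ∂ℙ)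
      = μ2 * (b2 : ℝ) + μ4 * (b0 : ℝ) := by
    intro b0 b1 b2
    have e2 : (∫ ω, G2 b0 b1 b2 ω ∂ℙ)
        = ∫ ω, (∑ i ∈ range b2, Y2 i ω + ∑ i ∈ range b0, Y4 i ω) ∂ℙ := rfl
    have st1 : (∫ ω, (∑ i ∈ range b2, Y2 i ω + ∑ i ∈ range b0, Y4 i ω) ∂ℙ)
        = (∫ ω, (∑ i ∈ range b2, Y2 i ω) ∂ℙ) + ∫ ω, (∑ i ∈ range b0, Y4 i ω) ∂ℙ :=
      integral_add (integrable_finset_sum _ fun i _ => int2 i)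
        (integrable_finset_sum _ fun i _ => int4 i)
    have st2 : (∫ ω, (∑ i ∈ range b2, Y2 i ω) ∂ℙ) = ∑ i ∈ range b2, ∫ ω, Y2 i ω ∂ℙ :=
      integral_finset_sum _ fun i _ => int2 i
    have st3 : (∫ ω, (∑ i ∈ range b0, Y4 i ω) ∂ℙ) = ∑ i ∈ range b0, ∫ ω, Y4 i ω ∂ℙ :=
      integral_finset_sum _ fun i _ => int4 i
    rw [e2, st1, st2, st3, Finset.sum_congr rfl fun i _ => hE2 i,
      Finset.sum_congr rfl fun i _ => hE4 i]
    simp [Finset.sum_const, Finset.card_range]; try ring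
  -- independence of the indicator of B-events from functions of the Y's
  have hiI : iIndep (fun i => MeasurableSpace.comap (F i) inferInstance) ℙ := hindepF.iIndep
  set mB : MeasurableSpace Ω :=
    MeasurableSpace.comap (F none) (inferInstance : MeasurableSpace (ℝ × ℝ × ℝ)) with hmB
  set mY : MeasurableSpace Ω := ⨆ i ∈ ({none}ᶜ : Set (Option (ℕ ⊕ ℕ ⊕ ℕ))),
    MeasurableSpace.comap (F i) (inferInstance : MeasurableSpace (ℝ × ℝ × ℝ)) with hmY
  have hBigIndep : Indep mB mY ℙ := by
    have h := indep_iSup_of_disjoint (fun i => (hFmeas i).comap_le) hiI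
      (disjoint_compl_right : Disjoint ({none} : Set (Option (ℕ ⊕ ℕ ⊕ ℕ))) {none}ᶜ)
    refine indep_mono' h ?_ le_rfl
    exact le_iSup₂ (f := fun i (_ : i ∈ ({none} : Set (Option (ℕ ⊕ ℕ ⊕ ℕ)))) =>
      MeasurableSpace.comap (F i) inferInstance) none rfl
  have hmYle : ∀ (i : Option (ℕ ⊕ ℕ ⊕ ℕ)), i ≠ none →
      MeasurableSpace.comap (F i) (inferInstance : MeasurableSpace (ℝ × ℝ × ℝ)) ≤ mY :=
    fun i hi => le_iSup₂ (f := fun i (_ : i ∈ ({none}ᶜ : Set (Option (ℕ ⊕ ℕ ⊕ ℕ)))) =>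
      MeasurableSpace.comap (F i) inferInstance) i hi
  have hY1mY : ∀ i, Measurable[mY] (Y1 i) := fun i =>
    measurable_fst.comp (Measurable.of_comap_le (hmYle (some (Sum.inl i)) (by simp)))
  have hY2mY : ∀ i, Measurable[mY] (Y2 i) := fun i =>
    measurable_fst.comp (Measurable.of_comap_le (hmYle (some (Sum.inr (Sum.inl i))) (by simp)))
  have hY3mY : ∀ i, Measurable[mY] (Y3 i) := fun i =>
    measurable_fst.comp (Measurable.of_comap_le (hmYle (some (Sum.inr (Sum.inr i))) (by simp)))
  have hY4mY : ∀ i, Measurable[mY] (Y4 i) := fun i =>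
    (measurable_fst.comp measurable_snd).comp
      (Measurable.of_comap_le (hmYle (some (Sum.inr (Sum.inr i))) (by simp)))
  have hGmY : ∀ b0 b1 b2, Measurable[mY] (G b0 b1 b2) := by
    intro b0 b1 b2
    exact Measurable.mul
      (Measurable.add (Finset.measurable_sum _ fun i _ => hY1mY i)
        (Finset.measurable_sum _ fun i _ => hY3mY i))
      (Measurable.add (Finset.measurable_sum _ fun i _ => hY2mY i)
        (Finset.measurable_sum _ fun i _ => hY4mY i))
  have hG1mY : ∀ b0 b1 b2, Measurable[mY] (G1 b0 b1 b2) := fun b0 b1 b2 =>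
    Measurable.add (Finset.measurable_sum _ fun i _ => hY1mY i)
      (Finset.measurable_sum _ fun i _ => hY3mY i)
  have hG2mY : ∀ b0 b1 b2, Measurable[mY] (G2 b0 b1 b2) := fun b0 b1 b2 =>
    Measurable.add (Finset.measurable_sum _ fun i _ => hY2mY i)
      (Finset.measurable_sum _ fun i _ => hY4mY i)
  have hindmB : ∀ b0 b1 b2 : ℕ, Measurable[mB]
      (Set.indicator {ω | B0 ω = b0 ∧ B1 ω = b1 ∧ B2 ω = b2} (fun _ => (1:ℝ))) := by
    intro b0 b1 b2
    have hset : MeasurableSet[mB] {ω | B0 ω = b0 ∧ B1 ω = b1 ∧ B2 ω = b2} := by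
      refine ⟨{(((b0:ℝ), (b1:ℝ), (b2:ℝ)))}, measurableSet_singleton _, ?_⟩
      ext ω
      simp only [Set.mem_preimage, Set.mem_singleton_iff, Set.mem_setOf_eq, hF,
        Prod.mk.injEq, Nat.cast_inj]
    exact Measurable.indicator measurable_const hset
  have hGindep : ∀ b0 b1 b2, IndepFun
      (Set.indicator {ω | B0 ω = b0 ∧ B1 ω = b1 ∧ B2 ω = b2} (fun _ => (1:ℝ)))
      (G b0 b1 b2) ℙ := fun b0 b1 b2 =>
    indepFun_of_measurable_le hBigIndep (hindmB b0 b1 b2) (hGmY b0 b1 b2)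
  have hG1indep : ∀ b0 b1 b2, IndepFun
      (Set.indicator {ω | B0 ω = b0 ∧ B1 ω = b1 ∧ B2 ω = b2} (fun _ => (1:ℝ)))
      (G1 b0 b1 b2) ℙ := fun b0 b1 b2 =>
    indepFun_of_measurable_le hBigIndep (hindmB b0 b1 b2) (hG1mY b0 b1 b2)
  have hG2indep : ∀ b0 b1 b2, IndepFun
      (Set.indicator {ω | B0 ω = b0 ∧ B1 ω = b1 ∧ B2 ω = b2} (fun _ => (1:ℝ)))
      (G2 b0 b1 b2) ℙ := fun b0 b1 b2 =>
    indepFun_of_measurable_le hBigIndep (hindmB b0 b1 b2) (hG2mY b0 b1 b2)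
  -- decompose the three expectations over the values of (B0, B1, B2)
  have hdec := expectation_decomp t B0 B1 B2 hB0 hB1 hB2 hle G hGint hGindep
    (fun ω => (∑ i ∈ Finset.range (B1 ω), Y1 i ω + ∑ i ∈ Finset.range (B0 ω), Y3 i ω) *
          (∑ i ∈ Finset.range (B2 ω), Y2 i ω + ∑ i ∈ Finset.range (B0 ω), Y4 i ω))
    (fun ω => rfl)
  have hdec1 := expectation_decomp t B0 B1 B2 hB0 hB1 hB2 hle G1 hG1int hG1indep
    (fun ω => ∑ i ∈ Finset.range (B1 ω), Y1 i ω + ∑ i ∈ Finset.range (B0 ω), Y3 i ω)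
    (fun ω => rfl)
  have hdec2 := expectation_decomp t B0 B1 B2 hB0 hB1 hB2 hle G2 hG2int hG2indep
    (fun ω => ∑ i ∈ Finset.range (B2 ω), Y2 i ω + ∑ i ∈ Finset.range (B0 ω), Y4 i ω)
    (fun ω => rfl)
  have hsum1 : p0 + p1 + p2 + (1 - (p0 + p1 + p2)) = 1 := by ring
  -- cross moment
  have hmain : (∫ ω, (∑ i ∈ Finset.range (B1 ω), Y1 i ω + ∑ i ∈ Finset.range (B0 ω), Y3 i ω) *
          (∑ i ∈ Finset.range (B2 ω), Y2 i ω + ∑ i ∈ Finset.range (B0 ω), Y4 i ω) ∂ℙ)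
      = (t : ℝ) * p0 * m34
        + (t : ℝ) * ((t : ℝ) - 1) * (p1 * μ1 + p0 * μ3) * (p2 * μ2 + p0 * μ4) := by
    rw [hdec]
    have congrstep : (∑ b0 ∈ range (t+1), ∑ b1 ∈ range (t+1-b0), ∑ b2 ∈ range (t+1-b0-b1),
        (ℙ {ω | B0 ω = b0 ∧ B1 ω = b1 ∧ B2 ω = b2}).toReal * ∫ ω, G b0 b1 b2 ω ∂ℙ)
        = msum t p0 p1 p2 (1 - (p0 + p1 + p2)) (fun b0 b1 b2 =>
            μ1 * μ2 * ((b1 : ℝ) * (b2 : ℝ)) + μ1 * μ4 * ((b0 : ℝ) * (b1 : ℝ))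
            + μ3 * μ2 * ((b0 : ℝ) * (b2 : ℝ)) + μ3 * μ4 * ((b0 : ℝ) * ((b0 : ℝ) - 1))
            + m34 * (b0 : ℝ)) := by
      simp only [msum]
      refine Finset.sum_congr rfl fun b0 hb0 => Finset.sum_congr rfl fun b1 hb1 =>
        Finset.sum_congr rfl fun b2 hb2 => ?_
      rw [Finset.mem_range] at hb0 hb1 hb2
      rw [hpmf b0 b1 b2, if_pos (show b0 + b1 + b2 ≤ t by omega), hGval b0 b1 b2]
      exact mul_comm _ _
    rw [congrstep]
    calc msum t p0 p1 p2 (1 - (p0 + p1 + p2)) (fun b0 b1 b2 =>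
            μ1 * μ2 * ((b1 : ℝ) * (b2 : ℝ)) + μ1 * μ4 * ((b0 : ℝ) * (b1 : ℝ))
            + μ3 * μ2 * ((b0 : ℝ) * (b2 : ℝ)) + μ3 * μ4 * ((b0 : ℝ) * ((b0 : ℝ) - 1))
            + m34 * (b0 : ℝ))
        = (μ1 * μ2) * msum t p0 p1 p2 (1 - (p0 + p1 + p2)) (fun _ b1 b2 => (b1 : ℝ) * (b2 : ℝ))
          + (μ1 * μ4) * msum t p0 p1 p2 (1 - (p0 + p1 + p2)) (fun b0 b1 _ => (b0 : ℝ) * (b1 : ℝ))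
          + (μ3 * μ2) * msum t p0 p1 p2 (1 - (p0 + p1 + p2)) (fun b0 _ b2 => (b0 : ℝ) * (b2 : ℝ))
          + (μ3 * μ4) * msum t p0 p1 p2 (1 - (p0 + p1 + p2))
              (fun b0 _ _ => (b0 : ℝ) * ((b0 : ℝ) - 1))
          + m34 * msum t p0 p1 p2 (1 - (p0 + p1 + p2)) (fun b0 _ _ => (b0 : ℝ)) :=
          msum_decomp5 t p0 p1 p2 (1 - (p0 + p1 + p2)) (μ1 * μ2) (μ1 * μ4) (μ3 * μ2) (μ3 * μ4)
            m34 (fun _ b1 b2 => (b1 : ℝ) * (b2 : ℝ)) (fun b0 b1 _ => (b0 : ℝ) * (b1 : ℝ))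
            (fun b0 _ b2 => (b0 : ℝ) * (b2 : ℝ)) (fun b0 _ _ => (b0 : ℝ) * ((b0 : ℝ) - 1))
            (fun b0 _ _ => (b0 : ℝ))
      _ = (t : ℝ) * p0 * m34
          + (t : ℝ) * ((t : ℝ) - 1) * (p1 * μ1 + p0 * μ3) * (p2 * μ2 + p0 * μ4) := by
          rw [msum_b1b2, msum_b0b1, msum_b0b2, msum_b0b0, msum_b0, hsum1, one_pow, one_pow]
          ring
  have hES1 : (∫ ω, (∑ i ∈ Finset.range (B1 ω), Y1 i ω
        + ∑ i ∈ Finset.range (B0 ω), Y3 i ω) ∂ℙ) = (t : ℝ) * (p1 * μ1 + p0 * μ3) := by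
    rw [hdec1]
    have congrstep : (∑ b0 ∈ range (t+1), ∑ b1 ∈ range (t+1-b0), ∑ b2 ∈ range (t+1-b0-b1),
        (ℙ {ω | B0 ω = b0 ∧ B1 ω = b1 ∧ B2 ω = b2}).toReal * ∫ ω, G1 b0 b1 b2 ω ∂ℙ)
        = msum t p0 p1 p2 (1 - (p0 + p1 + p2))
            (fun b0 b1 _ => μ1 * (b1 : ℝ) + μ3 * (b0 : ℝ)) := by
      simp only [msum]
      refine Finset.sum_congr rfl fun b0 hb0 => Finset.sum_congr rfl fun b1 hb1 =>
        Finset.sum_congr rfl fun b2 hb2 => ?_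
      rw [Finset.mem_range] at hb0 hb1 hb2
      rw [hpmf b0 b1 b2, if_pos (show b0 + b1 + b2 ≤ t by omega), hG1val b0 b1 b2]
      exact mul_comm _ _
    rw [congrstep]
    calc msum t p0 p1 p2 (1 - (p0 + p1 + p2)) (fun b0 b1 _ => μ1 * (b1 : ℝ) + μ3 * (b0 : ℝ))
        = μ1 * msum t p0 p1 p2 (1 - (p0 + p1 + p2)) (fun _ b1 _ => (b1 : ℝ))
          + μ3 * msum t p0 p1 p2 (1 - (p0 + p1 + p2)) (fun b0 _ _ => (b0 : ℝ)) :=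
          msum_decomp2 t p0 p1 p2 (1 - (p0 + p1 + p2)) μ1 μ3
            (fun _ b1 _ => (b1 : ℝ)) (fun b0 _ _ => (b0 : ℝ))
      _ = (t : ℝ) * (p1 * μ1 + p0 * μ3) := by
          rw [msum_b1, msum_b0, hsum1, one_pow]; ring
  have hES2 : (∫ ω, (∑ i ∈ Finset.range (B2 ω), Y2 i ω
        + ∑ i ∈ Finset.range (B0 ω), Y4 i ω) ∂ℙ) = (t : ℝ) * (p2 * μ2 + p0 * μ4) := by
    rw [hdec2]
    have congrstep : (∑ b0 ∈ range (t+1), ∑ b1 ∈ range (t+1-b0), ∑ b2 ∈ range (t+1-b0-b1),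
        (ℙ {ω | B0 ω = b0 ∧ B1 ω = b1 ∧ B2 ω = b2}).toReal * ∫ ω, G2 b0 b1 b2 ω ∂ℙ)
        = msum t p0 p1 p2 (1 - (p0 + p1 + p2))
            (fun b0 _ b2 => μ2 * (b2 : ℝ) + μ4 * (b0 : ℝ)) := by
      simp only [msum]
      refine Finset.sum_congr rfl fun b0 hb0 => Finset.sum_congr rfl fun b1 hb1 =>
        Finset.sum_congr rfl fun b2 hb2 => ?_
      rw [Finset.mem_range] at hb0 hb1 hb2
      rw [hpmf b0 b1 b2, if_pos (show b0 + b1 + b2 ≤ t by omega), hG2val b0 b1 b2]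
      exact mul_comm _ _
    rw [congrstep]
    calc msum t p0 p1 p2 (1 - (p0 + p1 + p2)) (fun b0 _ b2 => μ2 * (b2 : ℝ) + μ4 * (b0 : ℝ))
        = μ2 * msum t p0 p1 p2 (1 - (p0 + p1 + p2)) (fun _ _ b2 => (b2 : ℝ))
          + μ4 * msum t p0 p1 p2 (1 - (p0 + p1 + p2)) (fun b0 _ _ => (b0 : ℝ)) :=
          msum_decomp2 t p0 p1 p2 (1 - (p0 + p1 + p2)) μ2 μ4
            (fun _ _ b2 => (b2 : ℝ)) (fun b0 _ _ => (b0 : ℝ))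
      _ = (t : ℝ) * (p2 * μ2 + p0 * μ4) := by
          rw [msum_b2, msum_b0, hsum1, one_pow]; ring
  refine ⟨?_, ?_⟩
  · exact hmain
  · rw [hmain, hES1, hES2]; ring
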